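/- For n = 2, if Q is the unbounded vertical face Q = {(a, y) : y ≥ b} of P_a with a > 0, then R_Q = {-k/a : 1 ≤ k ≤ a}. -/

import Mathlib

open Set

namespace BS

def toR {n : ℕ} (u : Fin n → ℤ) : Fin n → ℝ := fun i => (u i : ℝ)

def natR {n : ℕ} (u : Fin n → ℕ) : Fin n → ℝ := fun i => (u i : ℝ)

def natZ {n : ℕ} (u : Fin n → ℕ) : Fin n → ℤ := fun i => (u i : ℤ)

/-- `Γ` is the exponent set of a nonzero monomial ideal. -/
def IsMonIdeal {n : ℕ} (Γ : Set (Fin n → ℕ)) : Prop :=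
  Γ.Nonempty ∧ ∀ u ∈ Γ, ∀ w : Fin n → ℕ, u + w ∈ Γ

/-- The Newton polyhedron: convex hull of the exponent set. -/
def newton {n : ℕ} (Γ : Set (Fin n → ℕ)) : Set (Fin n → ℝ) :=
  convexHull ℝ (natR '' Γ)

/-- The subsemigroup (containing 0) of ℤⁿ generated by differences u - v,
u ∈ Γ, v ∈ Γ ∩ Q. -/
def diffMonoid {n : ℕ} (Γ : Set (Fin n → ℕ)) (Q : Set (Fin n → ℝ)) :
    AddSubmonoid (Fin n → ℤ) :=
  AddSubmonoid.closure {d | ∃ u ∈ Γ, ∃ v ∈ Γ, natR v ∈ Q ∧ d = natZ u - natZ v}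

/-- M_Q : the translate by e = (1,...,1) of the difference semigroup. -/
def MQ {n : ℕ} (Γ : Set (Fin n → ℕ)) (Q : Set (Fin n → ℝ)) : Set (Fin n → ℤ) :=
  {m | m - 1 ∈ diffMonoid Γ Q}

/-- M_Q^{(k)} = k·v₀ + M_Q. -/
def MQk {n : ℕ} (Γ : Set (Fin n → ℕ)) (Q : Set (Fin n → ℝ)) (v0 : Fin n → ℕ) (k : ℕ) :
    Set (Fin n → ℤ) :=
  {m | m - (k : ℤ) • natZ v0 ∈ MQ Γ Q}

/-- V_Q : linear span of the face Q. -/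
def VQ {n : ℕ} (Q : Set (Fin n → ℝ)) : Submodule ℝ (Fin n → ℝ) := Submodule.span ℝ Q

/-- R_Q = { -L_Q(u) : u ∈ (M_Q \ M_Q') ∩ V_Q }. -/
def RQ {n : ℕ} (Γ : Set (Fin n → ℕ)) (Q : Set (Fin n → ℝ)) (v0 : Fin n → ℕ)
    (L : (Fin n → ℝ) →ₗ[ℝ] ℝ) : Set ℝ :=
  {x | ∃ u ∈ MQ Γ Q \ MQk Γ Q v0 1, toR u ∈ VQ Q ∧ x = - L (toR u)}

/-- Q is contained in some coordinate hyperplane. -/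
def InCoordHyp {n : ℕ} (Q : Set (Fin n → ℝ)) : Prop := ∃ i, ∀ q ∈ Q, q i = 0

/-- The subgroup G_Q of ℤⁿ generated by differences of elements of Γ ∩ Q. -/
def diffGroup {n : ℕ} (Γ : Set (Fin n → ℕ)) (Q : Set (Fin n → ℝ)) :
    AddSubgroup (Fin n → ℤ) :=
  AddSubgroup.closure
    {d | ∃ u ∈ Γ, natR u ∈ Q ∧ ∃ v ∈ Γ, natR v ∈ Q ∧ d = natZ u - natZ v}

end BS

section Aux

open BS

@[simp] lemma BS_natR_apply {n : ℕ} (u : Fin n → ℕ) (i : Fin n) : BS.natR u i = (u i : ℝ) := rfl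
@[simp] lemma BS_natZ_apply {n : ℕ} (u : Fin n → ℕ) (i : Fin n) : BS.natZ u i = (u i : ℤ) := rfl
@[simp] lemma BS_toR_apply {n : ℕ} (u : Fin n → ℤ) (i : Fin n) : BS.toR u i = (u i : ℝ) := rfl

/-- Every vector of `ℝ²` is in the span of the vertical face. -/
lemma mem_span_vertical (a b : ℕ) (ha : 0 < a) (x : Fin 2 → ℝ) :
    x ∈ BS.VQ {x : Fin 2 → ℝ | x 0 = (a : ℝ) ∧ (b : ℝ) ≤ x 1} := by
  set Q : Set (Fin 2 → ℝ) := {x : Fin 2 → ℝ | x 0 = (a : ℝ) ∧ (b : ℝ) ≤ x 1}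
  have hq1 : (![(a : ℝ), (b : ℝ)] : Fin 2 → ℝ) ∈ Q := by
    constructor <;> simp
  have hq2 : (![(a : ℝ), (b : ℝ) + 1] : Fin 2 → ℝ) ∈ Q := by
    constructor <;> simp
  have hE1 : (![0, 1] : Fin 2 → ℝ) ∈ BS.VQ Q := by
    have h := Submodule.sub_mem (BS.VQ Q) (Submodule.subset_span hq2) (Submodule.subset_span hq1)
    convert h using 1
    funext i; fin_cases i <;> simp
  have hE0 : (![1, 0] : Fin 2 → ℝ) ∈ BS.VQ Q := by
    have h := Submodule.sub_mem (BS.VQ Q) (Submodule.subset_span hq1)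
      (Submodule.smul_mem _ (b : ℝ) hE1)
    have h2 := Submodule.smul_mem (BS.VQ Q) ((a : ℝ)⁻¹) h
    convert h2 using 1
    have haR : (a : ℝ) ≠ 0 := Nat.cast_ne_zero.2 ha.ne'
    funext i; fin_cases i <;> simp [haR]
  have hdec : x = x 0 • (![1, 0] : Fin 2 → ℝ) + x 1 • (![0, 1] : Fin 2 → ℝ) := by
    funext i; fin_cases i <;> simp
  rw [hdec]
  exact Submodule.add_mem _ (Submodule.smul_mem _ _ hE0) (Submodule.smul_mem _ _ hE1)

end Aux

/-- For n = 2 and the unbounded vertical face Q = {(a,y) : y ≥ b} with a > 0: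
R_Q = {-k/a : 1 ≤ k ≤ a}. -/
theorem vertical_face_RQ (a b : ℕ) (ha : 0 < a) (hb : 0 < b)
    (Γ : Set (Fin 2 → ℕ)) (hΓ : BS.IsMonIdeal Γ)
    (hface : IsExposed ℝ (BS.newton Γ)
      {x : Fin 2 → ℝ | x 0 = (a : ℝ) ∧ (b : ℝ) ≤ x 1})
    (v0 : Fin 2 → ℕ) (hv0 : v0 ∈ Γ)
    (hv0Q : BS.natR v0 ∈ {x : Fin 2 → ℝ | x 0 = (a : ℝ) ∧ (b : ℝ) ≤ x 1})
    (L : (Fin 2 → ℝ) →ₗ[ℝ] ℝ) (hL : ∀ x, L x = x 0 / (a : ℝ)) :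
    BS.RQ Γ {x : Fin 2 → ℝ | x 0 = (a : ℝ) ∧ (b : ℝ) ≤ x 1} v0 L =
      {x : ℝ | ∃ k : ℕ, 1 ≤ k ∧ k ≤ a ∧ x = -(k : ℝ) / (a : ℝ)} := by
  set Q : Set (Fin 2 → ℝ) := {x : Fin 2 → ℝ | x 0 = (a : ℝ) ∧ (b : ℝ) ≤ x 1} with hQdef
  -- basic facts about v0
  have hv00 : v0 0 = a := by have h : ((v0 0 : ℕ) : ℝ) = a := hv0Q.1; exact_mod_cast h
  have hv01 : b ≤ v0 1 := by have h : (b : ℝ) ≤ ((v0 1 : ℕ) : ℝ) := hv0Q.2; exact_mod_cast h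
  -- standard basis vectors (ℕ)
  set e0 : Fin 2 → ℕ := ![1, 0] with he0
  set e1 : Fin 2 → ℕ := ![0, 1] with he1
  have hmem1 : v0 + e1 ∈ Γ := hΓ.2 v0 hv0 e1
  have hmem0 : v0 + e0 ∈ Γ := hΓ.2 v0 hv0 e0
  have hv0e1Q : BS.natR (v0 + e1) ∈ Q := by
    constructor
    · show ((v0 + e1) 0 : ℝ) = (a : ℝ)
      have : (v0 + e1) 0 = a := by simp [he1, hv00]
      exact_mod_cast this
    · show (b : ℝ) ≤ ((v0 + e1) 1 : ℝ)
      have : b ≤ (v0 + e1) 1 := by simp [he1]; omega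
      exact_mod_cast this
  have hNmem : ∀ u ∈ Γ, BS.natR u ∈ BS.newton Γ := fun u hu =>
    subset_convexHull ℝ _ ⟨u, hu, rfl⟩
  -- key step: every u ∈ Γ has a ≤ u 0
  have hkey : ∀ u ∈ Γ, a ≤ u 0 := by
    obtain ⟨l, hlF⟩ := hface ⟨BS.natR v0, hv0Q⟩
    have hp1F : BS.natR v0 ∈ {x ∈ BS.newton Γ | ∀ y ∈ BS.newton Γ, l y ≤ l x} := by
      rw [← hlF]; exact hv0Q
    have hp1N : BS.natR v0 ∈ BS.newton Γ := hp1F.1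
    have hmax : ∀ y ∈ BS.newton Γ, l y ≤ l (BS.natR v0) := hp1F.2
    have hp2F : BS.natR (v0 + e1) ∈ {x ∈ BS.newton Γ | ∀ y ∈ BS.newton Γ, l y ≤ l x} := by
      rw [← hlF]; exact hv0e1Q
    have hp2N : BS.natR (v0 + e1) ∈ BS.newton Γ := hp2F.1
    have hlp12 : l (BS.natR v0) = l (BS.natR (v0 + e1)) :=
      le_antisymm (hp2F.2 _ hp1N) (hmax _ hp2N)
    set c0 : ℝ := l ![1, 0] with hc0
    set c1 : ℝ := l ![0, 1] with hc1
    have hdec : ∀ x : Fin 2 → ℝ, l x = x 0 * c0 + x 1 * c1 := by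
      intro x
      have hx : x = x 0 • (![1, 0] : Fin 2 → ℝ) + x 1 • (![0, 1] : Fin 2 → ℝ) := by
        funext i; fin_cases i <;> simp
      conv_lhs => rw [hx]
      rw [map_add, map_smul, map_smul, smul_eq_mul, smul_eq_mul]
    have hv00R : (v0 0 : ℝ) = (a : ℝ) := by exact_mod_cast hv00
    have hv0c : l (BS.natR v0) = (a : ℝ) * c0 + (v0 1 : ℝ) * c1 := by
      rw [hdec]; simp [hv00R]
    have hv1c : l (BS.natR (v0 + e1)) = (a : ℝ) * c0 + ((v0 1 : ℝ) + 1) * c1 := by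
      rw [hdec]
      have h0 : (v0 + e1) 0 = a := by simp [he1, hv00]
      have h1 : (v0 + e1) 1 = v0 1 + 1 := by simp [he1]
      rw [BS_natR_apply, BS_natR_apply, h0, h1]
      push_cast; ring
    have hc1z : c1 = 0 := by
      rw [hv0c, hv1c] at hlp12; linarith
    have hp3N : BS.natR (v0 + e0) ∈ BS.newton Γ := hNmem _ hmem0
    have hp3c : l (BS.natR (v0 + e0)) = ((a : ℝ) + 1) * c0 := by
      rw [hdec]
      have h0 : (v0 + e0) 0 = a + 1 := by simp [he0, hv00]
      rw [BS_natR_apply, h0, hc1z]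
      push_cast; ring
    have hp3not : ¬ (∀ y ∈ BS.newton Γ, l y ≤ l (BS.natR (v0 + e0))) := by
      intro hmax3
      have hmem : BS.natR (v0 + e0) ∈ Q := by
        rw [hlF]; exact ⟨hp3N, hmax3⟩
      have h0 : ((v0 + e0) 0 : ℝ) = (a : ℝ) := hmem.1
      have h0' : (v0 + e0) 0 = a := by exact_mod_cast h0
      simp [he0] at h0'
      omega
    push_neg at hp3not
    obtain ⟨y, hyN, hy⟩ := hp3not
    have hyle : l y ≤ l (BS.natR v0) := hmax y hyN
    have hc0neg : c0 < 0 := by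
      rw [hp3c] at hy
      rw [hv0c, hc1z] at hyle
      linarith
    intro u hu
    have h := hmax _ (hNmem u hu)
    rw [hdec, hv0c, hc1z] at h
    simp only [BS_natR_apply, mul_zero, add_zero] at h
    have hR : (a : ℝ) ≤ (u 0 : ℝ) := by nlinarith
    exact_mod_cast hR
  -- characterization of the difference monoid
  have hS1 : ∀ d ∈ BS.diffMonoid Γ Q, 0 ≤ d 0 := by
    intro d hd
    induction hd using AddSubmonoid.closure_induction with
    | mem x hx =>
      obtain ⟨u, hu, v, hv, hvQ, rfl⟩ := hx
      have hva : v 0 = a := by have h : ((v 0 : ℕ) : ℝ) = a := hvQ.1; exact_mod_cast h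
      have hua : a ≤ u 0 := hkey u hu
      show 0 ≤ (u 0 : ℤ) - (v 0 : ℤ)
      omega
    | zero => simp
    | add x y hx hy ihx ihy =>
      show 0 ≤ x 0 + y 0
      omega
  have hS2 : ∀ d : Fin 2 → ℤ, 0 ≤ d 0 → d ∈ BS.diffMonoid Γ Q := by
    intro d hd
    have hg1 : BS.natZ (v0 + e0) - BS.natZ v0 ∈ BS.diffMonoid Γ Q :=
      AddSubmonoid.subset_closure ⟨v0 + e0, hmem0, v0, hv0, hv0Q, rfl⟩
    have hg2 : BS.natZ (v0 + e1) - BS.natZ v0 ∈ BS.diffMonoid Γ Q :=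
      AddSubmonoid.subset_closure ⟨v0 + e1, hmem1, v0, hv0, hv0Q, rfl⟩
    have hg3 : BS.natZ v0 - BS.natZ (v0 + e1) ∈ BS.diffMonoid Γ Q :=
      AddSubmonoid.subset_closure ⟨v0, hv0, v0 + e1, hmem1, hv0e1Q, rfl⟩
    have hrep : d = (d 0).toNat • (BS.natZ (v0 + e0) - BS.natZ v0)
        + (d 1).toNat • (BS.natZ (v0 + e1) - BS.natZ v0)
        + (-(d 1)).toNat • (BS.natZ v0 - BS.natZ (v0 + e1)) := by
      funext i
      fin_cases i <;>
        simp [BS.natZ, he0, he1, Matrix.vecHead, Matrix.vecTail, Pi.smul_apply, Pi.add_apply, Pi.sub_apply] <;> omega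
    rw [hrep]
    exact AddSubmonoid.add_mem _
      (AddSubmonoid.add_mem _ (AddSubmonoid.nsmul_mem _ hg1 _)
        (AddSubmonoid.nsmul_mem _ hg2 _))
      (AddSubmonoid.nsmul_mem _ hg3 _)
  -- characterization of MQ and MQ'
  have hMQ : ∀ m : Fin 2 → ℤ, m ∈ BS.MQ Γ Q ↔ 1 ≤ m 0 := by
    intro m
    constructor
    · intro h
      have := hS1 _ h
      have h0 : (m - 1) 0 = m 0 - 1 := rfl
      omega
    · intro h
      show m - 1 ∈ BS.diffMonoid Γ Q
      apply hS2
      show 0 ≤ m 0 - 1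
      omega
  have hMQk : ∀ m : Fin 2 → ℤ, m ∈ BS.MQk Γ Q v0 1 ↔ (a : ℤ) + 1 ≤ m 0 := by
    intro m
    have : m ∈ BS.MQk Γ Q v0 1 ↔ m - (1 : ℤ) • BS.natZ v0 ∈ BS.MQ Γ Q := Iff.rfl
    rw [this, hMQ]
    have h0 : (m - (1 : ℤ) • BS.natZ v0) 0 = m 0 - (v0 0 : ℤ) := by
      simp [BS.natZ]
    rw [h0, hv00]
    omega
  -- conclusion
  ext x
  constructor
  · rintro ⟨u, ⟨huMQ, huMQk⟩, -, rfl⟩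
    rw [hMQ] at huMQ
    rw [hMQk] at huMQk
    push_neg at huMQk
    refine ⟨(u 0).toNat, by omega, by omega, ?_⟩
    rw [hL]
    have : BS.toR u 0 = (u 0 : ℝ) := rfl
    rw [this, neg_div]
    congr 2
    have := Int.toNat_of_nonneg (by omega : (0:ℤ) ≤ u 0)
    exact_mod_cast this.symm
  · rintro ⟨k, hk1, hk2, rfl⟩
    refine ⟨![(k : ℤ), 0], ⟨?_, ?_⟩, ?_, ?_⟩
    · rw [hMQ]; simp; exact_mod_cast hk1
    · rw [hMQk]; simp; exact_mod_cast hk2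
    · exact mem_span_vertical a b ha _
    · rw [hL]
      have : BS.toR ![(k : ℤ), 0] 0 = (k : ℝ) := by
        simp
      rw [this, neg_div]
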